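/- Let K ≥ 1, let F be a finite index set (the lag set), and for each τ ∈ F let Γ(τ) be a real K × K diagonal matrix whose k-th diagonal entry is γ_k(τ). Suppose there exist real coefficients β_τ, τ ∈ F, such that the numbers λ_k = Σ_{τ∈F} β_τ γ_k(τ), k = 1,…,K, are pairwise distinct (the simple temporal contrast assumption). Let Q be a real K × K orthogonal matrix such that Qᵀ Γ(τ) Q is diagonal for every τ ∈ F. Then Q is a signed permutation matrix: there exist a permutation σ of {1,…,K} and signs ε_1, …, ε_K ∈ {−1, +1} such that the (i,j) entry of Q equals ε_j when i = σ(j) and equals 0 otherwise. -/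

import Mathlib

open Matrix

/-- Entrywise formula for `Qᵀ * diagonal μ * Q`. -/
lemma entry_formula {K : ℕ} (Q : Matrix (Fin K) (Fin K) ℝ) (μ : Fin K → ℝ)
    (i j : Fin K) :
    (Qᵀ * Matrix.diagonal μ * Q) i j = ∑ k, Q k i * μ k * Q k j := by
  rw [Matrix.mul_apply]
  refine Finset.sum_congr rfl fun k _ => ?_
  rw [Matrix.mul_diagonal, Matrix.transpose_apply]

/-- joint diagonalization of the lagged autocovariance matrices
under the simple temporal contrast assumption forces the orthogonal
ambiguity `Q` to be a signed permutation matrix. -/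
theorem stmt4 {K : ℕ} (hK : 1 ≤ K) {ι : Type*} [Fintype ι]
    (γ : ι → Fin K → ℝ) (β : ι → ℝ)
    (hcontrast : ∀ i j : Fin K, i ≠ j →
      (∑ τ, β τ * γ τ i) ≠ (∑ τ, β τ * γ τ j))
    (Q : Matrix (Fin K) (Fin K) ℝ)
    (hQ : Qᵀ * Q = 1)
    (hdiag : ∀ τ : ι, (Qᵀ * Matrix.diagonal (γ τ) * Q).IsDiag) :
    ∃ (σ : Equiv.Perm (Fin K)) (ε : Fin K → ℝ),
      (∀ j, ε j = 1 ∨ ε j = -1) ∧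
      ∀ i j, Q i j = if i = σ j then ε j else 0 := by
  set lam : Fin K → ℝ := fun k => ∑ τ, β τ * γ τ k with hlam
  set M : Matrix (Fin K) (Fin K) ℝ := Qᵀ * Matrix.diagonal lam * Q with hMdef
  -- M is diagonal
  have hM : M.IsDiag := by
    intro i j hij
    have h1 : M i j = ∑ k, Q k i * lam k * Q k j := entry_formula Q lam i j
    have h2 : ∀ τ : ι, ∑ k, Q k i * γ τ k * Q k j = 0 := by
      intro τ
      rw [← entry_formula Q (γ τ) i j]
      exact hdiag τ hij
    have hterm : ∀ k, Q k i * lam k * Q k j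
        = ∑ τ, β τ * (Q k i * γ τ k * Q k j) := by
      intro k
      simp only [hlam]
      rw [Finset.mul_sum, Finset.sum_mul]
      exact Finset.sum_congr rfl fun τ _ => by ring
    have hswap : ∑ k, Q k i * lam k * Q k j
        = ∑ τ, β τ * ∑ k, Q k i * γ τ k * Q k j := by
      simp_rw [hterm, Finset.mul_sum]
      exact Finset.sum_comm
    rw [h1, hswap]
    simp [h2]
  -- intertwining: diagonal lam * Q = Q * M
  have hQQT : Q * Qᵀ = 1 := by rwa [mul_eq_one_comm] at hQ
  have hint : Matrix.diagonal lam * Q = Q * M := by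
    rw [hMdef, ← Matrix.mul_assoc, ← Matrix.mul_assoc, hQQT, Matrix.one_mul]
  have key : ∀ i j, Q i j ≠ 0 → lam i = M j j := by
    intro i j hij
    have h1 : (Matrix.diagonal lam * Q) i j = lam i * Q i j := by
      simp [Matrix.diagonal_mul]
    have h2 : (Q * M) i j = Q i j * M j j := by
      rw [Matrix.mul_apply]
      refine Finset.sum_eq_single j (fun k _ hk => ?_) (by simp)
      rw [hM hk, mul_zero]
    have heq := congrArg (fun A => A i j) hint
    change (Matrix.diagonal lam * Q) i j = (Q * M) i j at heq
    rw [h1, h2] at heq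
    have h3 : lam i * Q i j = M j j * Q i j := by rw [heq]; ring
    exact mul_right_cancel₀ hij h3
  -- uniqueness of nonzero entry in each column
  have uniq : ∀ (j i i' : Fin K), Q i j ≠ 0 → Q i' j ≠ 0 → i = i' := by
    intro j i i' h h'
    by_contra hne
    exact hcontrast i i' hne ((key i j h).trans (key i' j h').symm)
  -- column norms
  have hcol : ∀ j, ∑ i, Q i j * Q i j = 1 := by
    intro j
    have := congrArg (fun A => A j j) hQ
    simpa [Matrix.mul_apply, Matrix.one_apply] using this
  -- existence of nonzero entry
  have hex : ∀ j, ∃ i, Q i j ≠ 0 := by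
    intro j
    by_contra h
    push_neg at h
    have := hcol j
    simp [h] at this
  choose f hf using hex
  -- injectivity of f
  have hinj : Function.Injective f := by
    intro j j' hjj'
    by_contra hne
    have horth : ∑ i, Q i j * Q i j' = 0 := by
      have := congrArg (fun A => A j j') hQ
      simpa [Matrix.mul_apply, Matrix.one_apply, hne] using this
    have hsingle : ∑ i, Q i j * Q i j' = Q (f j) j * Q (f j) j' := by
      refine Finset.sum_eq_single (f j) (fun i _ hi => ?_) (by simp)
      rcases eq_or_ne (Q i j) 0 with h0 | h0
      · rw [h0, zero_mul]
      · exact absurd (uniq j i (f j) h0 (hf j)) hi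
    rw [hsingle] at horth
    have := mul_eq_zero.mp horth
    rcases this with h | h
    · exact hf j h
    · rw [hjj'] at h; exact hf j' h
  let σ : Equiv.Perm (Fin K) := Equiv.ofBijective f (Finite.injective_iff_bijective.mp hinj)
  refine ⟨σ, fun j => Q (f j) j, ?_, ?_⟩
  · intro j
    have hsum : ∑ i, Q i j * Q i j = Q (f j) j * Q (f j) j := by
      refine Finset.sum_eq_single (f j) (fun i _ hi => ?_)
        (fun h => absurd (Finset.mem_univ _) h)
      rcases eq_or_ne (Q i j) 0 with h0 | h0
      · rw [h0, zero_mul]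
      · exact absurd (uniq j i (f j) h0 (hf j)) hi
    have hsq : Q (f j) j * Q (f j) j = 1 := by rw [← hsum]; exact hcol j
    exact mul_self_eq_one_iff.mp hsq
  · intro i j
    by_cases h : i = σ j
    · have : σ j = f j := rfl
      rw [if_pos h, h, this]
    · rw [if_neg h]
      by_contra h0
      exact h (uniq j i (f j) h0 (hf j))
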